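/- arXiv:2208.03010 — 2 statements merged into one kernel-verified Lean document; each statement's English description precedes it below -/
import Mathlib

section
/- Let (X,d) be a metric space, (x_k) a sequence in X, and C a compact subset of X such that C ∩ Γ_x = ∅, where Γ_x is the set of A^I-statistical cluster points of (x_k). Then δ_{A^I}({k ∈ ℕ : x_k ∈ C}) = 0 (paper's Theorem 4.5). -/
open Filter Topology

/-- `A` is a nonnegative regular summability matrix. -/
structure RegularMatrix (A : ℕ → ℕ → ℝ) : Prop where
  nonneg : ∀ n k, 0 ≤ A n k
  summable : ∀ n, Summable (A n)
  bounded : ∃ C : ℝ, ∀ n, (∑' k, |A n k|) ≤ C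
  col_lim : ∀ k, Tendsto (fun n => A n k) atTop (𝓝 0)
  row_sum : Tendsto (fun n => ∑' k, A n k) atTop (𝓝 1)

/-- `I` is a non-trivial admissible ideal on ℕ. -/
structure AdmissibleIdeal (I : Set (Set ℕ)) : Prop where
  union_mem : ∀ {a b : Set ℕ}, a ∈ I → b ∈ I → a ∪ b ∈ I
  subset_mem : ∀ {a b : Set ℕ}, a ∈ I → b ⊆ a → b ∈ I
  finite_mem : ∀ {s : Set ℕ}, s.Finite → s ∈ I
  univ_not_mem : Set.univ ∉ I

/-- `I`-limit of a real sequence. -/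
def ILim (I : Set (Set ℕ)) (t : ℕ → ℝ) (L : ℝ) : Prop :=
  ∀ ε > 0, {n : ℕ | ε ≤ |t n - L|} ∈ I

/-- The set `M ⊆ ℕ` has `A^I`-density `δ`, i.e. `I-lim_n Σ_{k∈M} a_{nk} = δ`. -/
def AIDensity (I : Set (Set ℕ)) (A : ℕ → ℕ → ℝ) (M : Set ℕ) (δ : ℝ) : Prop :=
  ILim I (fun n => ∑' k, M.indicator (A n) k) δ

/-- `x` is `A^I`-statistically convergent to `L`. -/
def AIStatConv {X : Type*} [MetricSpace X] (I : Set (Set ℕ)) (A : ℕ → ℕ → ℝ)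
    (x : ℕ → X) (L : X) : Prop :=
  ∀ ε > 0, AIDensity I A {k : ℕ | ε ≤ dist (x k) L} 0

/-- `x` is `A^I`-statistically Cauchy. -/
def AIStatCauchy {X : Type*} [MetricSpace X] (I : Set (Set ℕ)) (A : ℕ → ℕ → ℝ)
    (x : ℕ → X) : Prop :=
  ∀ γ > 0, ∃ k₀ : ℕ, AIDensity I A {k : ℕ | γ ≤ dist (x k) (x k₀)} 0

/-- The additive property for `A^I`-density zero sets (AP`A^I`O). -/
def APAIO (I : Set (Set ℕ)) (A : ℕ → ℕ → ℝ) : Prop :=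
  ∀ G : ℕ → Set ℕ, Pairwise (Function.onFun Disjoint G) →
    (∀ j, AIDensity I A (G j) 0) →
    ∃ H : ℕ → Set ℕ, (∀ j, (symmDiff (G j) (H j)).Finite) ∧
      AIDensity I A (⋃ j, H j) 0

/-- The set of `A^I`-statistical limit points of `x`: points to which some
subsequence of `x`, indexed by an (automatically infinite) set of indices whose
`A^I`-density is not equal to `0` (nonzero or nonexistent), converges. -/
def AIStatLimitPts {X : Type*} [MetricSpace X] (I : Set (Set ℕ)) (A : ℕ → ℕ → ℝ)
    (x : ℕ → X) : Set X :=
  {ζ : X | ∃ f : ℕ → ℕ, StrictMono f ∧ ¬ AIDensity I A (Set.range f) 0 ∧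
    Tendsto (fun j => x (f j)) atTop (𝓝 ζ)}

/-- The set of `A^I`-statistical cluster points of `x`. -/
def AIStatClusterPts {X : Type*} [MetricSpace X] (I : Set (Set ℕ)) (A : ℕ → ℕ → ℝ)
    (x : ℕ → X) : Set X :=
  {ν : X | ∀ ε > 0, ¬ AIDensity I A {k : ℕ | dist (x k) ν < ε} 0}

/-- The set of ordinary limit points of `x` (limits of subsequences). -/
def LimitPts {X : Type*} [MetricSpace X] (x : ℕ → X) : Set X :=
  {ζ : X | ∃ f : ℕ → ℕ, StrictMono f ∧ Tendsto (fun j => x (f j)) atTop (𝓝 ζ)}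

lemma density_mono {A : ℕ → ℕ → ℝ} {I : Set (Set ℕ)} (hA : RegularMatrix A)
    (hI : AdmissibleIdeal I) {M N : Set ℕ} (hMN : M ⊆ N) (hN : AIDensity I A N 0) :
    AIDensity I A M 0 := by
  intro ε hε
  refine hI.subset_mem (hN ε hε) ?_
  intro n hn
  simp only [Set.mem_setOf_eq, sub_zero] at *
  have hnn : ∀ S : Set ℕ, (0:ℝ) ≤ ∑' k, S.indicator (A n) k := fun S =>
    tsum_nonneg fun k => Set.indicator_nonneg (fun k _ => hA.nonneg n k) k
  have hle : (∑' k, M.indicator (A n) k) ≤ ∑' k, N.indicator (A n) k :=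
    Summable.tsum_le_tsum (fun k => Set.indicator_le_indicator_of_subset hMN (fun a => hA.nonneg n a) k)
      ((hA.summable n).indicator M) ((hA.summable n).indicator N)
  rw [abs_of_nonneg (hnn M)] at hn
  rw [abs_of_nonneg (hnn N)]
  exact hn.trans hle

lemma density_union {A : ℕ → ℕ → ℝ} {I : Set (Set ℕ)} (hA : RegularMatrix A)
    (hI : AdmissibleIdeal I) {M N : Set ℕ} (hM : AIDensity I A M 0)
    (hN : AIDensity I A N 0) : AIDensity I A (M ∪ N) 0 := by
  intro ε hε
  have h2 : (0:ℝ) < ε / 2 := by linarith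
  refine hI.subset_mem (hI.union_mem (hM (ε/2) h2) (hN (ε/2) h2)) ?_
  intro n hn
  simp only [Set.mem_setOf_eq, sub_zero, Set.mem_union] at *
  by_contra hcon
  push_neg at hcon
  obtain ⟨h1, h2'⟩ := hcon
  have hnn : ∀ S : Set ℕ, (0:ℝ) ≤ ∑' k, S.indicator (A n) k := fun S =>
    tsum_nonneg fun k => Set.indicator_nonneg (fun k _ => hA.nonneg n k) k
  rw [abs_of_nonneg (hnn M)] at h1
  rw [abs_of_nonneg (hnn N)] at h2'
  rw [abs_of_nonneg (hnn (M ∪ N))] at hn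
  have hptw : ∀ k, (M ∪ N).indicator (A n) k ≤ M.indicator (A n) k + N.indicator (A n) k := by
    intro k
    by_cases hk : k ∈ M <;> by_cases hk' : k ∈ N <;>
      simp [Set.indicator_apply, hk, hk', hA.nonneg n k]
  have hle : (∑' k, (M ∪ N).indicator (A n) k)
      ≤ ∑' k, (M.indicator (A n) k + N.indicator (A n) k) :=
    Summable.tsum_le_tsum hptw ((hA.summable n).indicator _)
      (((hA.summable n).indicator M).add ((hA.summable n).indicator N))
  rw [Summable.tsum_add ((hA.summable n).indicator M) ((hA.summable n).indicator N)] at hle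
  linarith

lemma density_empty {A : ℕ → ℕ → ℝ} {I : Set (Set ℕ)} (hI : AdmissibleIdeal I) :
    AIDensity I A (∅ : Set ℕ) 0 := by
  intro ε hε
  have : {n : ℕ | ε ≤ |(fun n => ∑' k, (∅ : Set ℕ).indicator (A n) k) n - 0|} = ∅ := by
    ext n; simp [Set.indicator_empty]; linarith
  rw [this]
  exact hI.finite_mem Set.finite_empty

lemma density_biUnion {A : ℕ → ℕ → ℝ} {I : Set (Set ℕ)} (hA : RegularMatrix A)
    (hI : AdmissibleIdeal I) {α : Type*} (t : Finset α) (f : α → Set ℕ)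
    (h : ∀ a ∈ t, AIDensity I A (f a) 0) : AIDensity I A (⋃ a ∈ t, f a) 0 := by
  classical
  induction t using Finset.induction_on with
  | empty => simpa using density_empty hI
  | insert a s hnotmem ih =>
    rw [Finset.set_biUnion_insert]
    exact density_union hA hI (h a (Finset.mem_insert_self a s))
      (ih fun b hb => h b (Finset.mem_insert_of_mem hb))

theorem stmt_17 {X : Type*} [MetricSpace X] (A : ℕ → ℕ → ℝ) (I : Set (Set ℕ))
    (hA : RegularMatrix A) (hI : AdmissibleIdeal I) (x : ℕ → X) (C : Set X)
    (hC : IsCompact C) (hdisj : C ∩ AIStatClusterPts I A x = ∅) :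
    AIDensity I A {k : ℕ | x k ∈ C} 0 := by
  classical
  have hkey : ∀ ν ∈ C, ∃ ε > 0, AIDensity I A {k : ℕ | dist (x k) ν < ε} 0 := by
    intro ν hν
    have : ν ∉ AIStatClusterPts I A x := by
      intro hmem
      have : ν ∈ C ∩ AIStatClusterPts I A x := ⟨hν, hmem⟩
      rw [hdisj] at this
      exact this
    simp only [AIStatClusterPts, Set.mem_setOf_eq, not_forall, not_not] at this
    obtain ⟨e, he, hd⟩ := this
    exact ⟨e, he, hd⟩
  choose! ε hεpos hεd using hkey
  obtain ⟨t, hcover⟩ := hC.elim_nhds_subcover' (fun ν hν => Metric.ball ν (ε ν))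
    (fun ν hν => Metric.ball_mem_nhds ν (hεpos ν hν))
  refine density_mono hA hI ?_
    (density_biUnion hA hI t (fun ν : C => {k : ℕ | dist (x k) ν.1 < ε ν.1})
      (fun ν hν => hεd ν.1 ν.2))
  intro k hk
  obtain ⟨ν, hνt, hkν⟩ := Set.mem_iUnion₂.mp (hcover hk)
  exact Set.mem_iUnion₂.mpr ⟨ν, hνt, Metric.mem_ball.mp hkν⟩
end

section
/- Let (X,d) be a metric space and (x_k) a sequence in X that is A^I-statistically bounded, i.e., there exists a compact subset C of X with δ_{A^I}({k ∈ ℕ : x_k ∉ C}) = 0. Then the set Γ_x of A^I-statistical cluster points of (x_k) is non-empty and compact; moreover Γ_x ⊆ C (paper's Theorem 4.7). -/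
open Filter Topology

section Aux

variable {I : Set (Set ℕ)} {A : ℕ → ℕ → ℝ}

lemma density_zero_mono (hA : RegularMatrix A) (hI : AdmissibleIdeal I)
    {M M' : Set ℕ} (h : M ⊆ M') (hM' : AIDensity I A M' 0) : AIDensity I A M 0 := by
  intro ε hε
  refine hI.subset_mem (hM' ε hε) ?_
  intro n hn
  simp only [Set.mem_setOf_eq, sub_zero] at hn ⊢
  have hs := hA.summable n
  have h1 : ∑' k, M.indicator (A n) k ≤ ∑' k, M'.indicator (A n) k :=
    Summable.tsum_le_tsum (fun k => Set.indicator_le_indicator_of_subset h (fun a => hA.nonneg n a) k)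
      (hs.indicator M) (hs.indicator M')
  have h0 : 0 ≤ ∑' k, M.indicator (A n) k :=
    tsum_nonneg fun k => Set.indicator_nonneg (fun a _ => hA.nonneg n a) k
  have h0' : 0 ≤ ∑' k, M'.indicator (A n) k :=
    tsum_nonneg fun k => Set.indicator_nonneg (fun a _ => hA.nonneg n a) k
  rw [abs_of_nonneg h0] at hn
  rw [abs_of_nonneg h0']
  linarith

lemma density_zero_union (hA : RegularMatrix A) (hI : AdmissibleIdeal I)
    {M N : Set ℕ} (hM : AIDensity I A M 0) (hN : AIDensity I A N 0) :
    AIDensity I A (M ∪ N) 0 := by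
  intro ε hε
  have h2 : (0:ℝ) < ε/2 := by linarith
  refine hI.subset_mem (hI.union_mem (hM (ε/2) h2) (hN (ε/2) h2)) ?_
  intro n hn
  simp only [Set.mem_setOf_eq, sub_zero, Set.mem_union] at hn ⊢
  by_contra hc
  push_neg at hc
  obtain ⟨hu, hv⟩ := hc
  have hs := hA.summable n
  have hnn : ∀ (S : Set ℕ) (k : ℕ), 0 ≤ S.indicator (A n) k :=
    fun S k => Set.indicator_nonneg (fun a _ => hA.nonneg n a) k
  have key : ∑' k, (M ∪ N).indicator (A n) k ≤
      (∑' k, M.indicator (A n) k) + ∑' k, N.indicator (A n) k := by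
    rw [← Summable.tsum_add (hs.indicator M) (hs.indicator N)]
    refine Summable.tsum_le_tsum (fun k => ?_) (hs.indicator _) ((hs.indicator M).add (hs.indicator N))
    by_cases hMk : k ∈ M
    · have hun : k ∈ M ∪ N := Or.inl hMk
      rw [Set.indicator_of_mem hun, Set.indicator_of_mem hMk]
      have := hnn N k
      linarith
    · by_cases hNk : k ∈ N
      · have hun : k ∈ M ∪ N := Or.inr hNk
        rw [Set.indicator_of_mem hun, Set.indicator_of_mem hNk, Set.indicator_of_notMem hMk]
        linarith
      · have hun : k ∉ M ∪ N := fun h => h.elim hMk hNk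
        rw [Set.indicator_of_notMem hun, Set.indicator_of_notMem hMk,
          Set.indicator_of_notMem hNk]
        linarith
  have h0 : 0 ≤ ∑' k, (M ∪ N).indicator (A n) k := tsum_nonneg (hnn _)
  have h0M : 0 ≤ ∑' k, M.indicator (A n) k := tsum_nonneg (hnn _)
  have h0N : 0 ≤ ∑' k, N.indicator (A n) k := tsum_nonneg (hnn _)
  rw [abs_of_nonneg h0] at hn
  rw [abs_of_nonneg h0M] at hu
  rw [abs_of_nonneg h0N] at hv
  linarith

lemma density_zero_empty (hA : RegularMatrix A) (hI : AdmissibleIdeal I) :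
    AIDensity I A (∅ : Set ℕ) 0 := by
  intro ε hε
  refine hI.subset_mem (hI.finite_mem Set.finite_empty) ?_
  intro n hn
  simp only [Set.mem_setOf_eq, Set.indicator_empty, tsum_zero, sub_zero, abs_zero] at hn
  exact absurd hn (by linarith)

lemma density_zero_biUnion {ι : Type*} (hA : RegularMatrix A) (hI : AdmissibleIdeal I)
    (s : Finset ι) (G : ι → Set ℕ) (h : ∀ i ∈ s, AIDensity I A (G i) 0) :
    AIDensity I A (⋃ i ∈ s, G i) 0 := by
  classical
  induction s using Finset.induction_on with
  | empty => simpa using density_zero_empty hA hI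
  | insert _ _ hx ih =>
    rw [Finset.set_biUnion_insert]
    exact density_zero_union hA hI (h _ (Finset.mem_insert_self _ _))
      (ih fun i hi => h i (Finset.mem_insert_of_mem hi))

lemma density_univ_one (hA : RegularMatrix A) (hI : AdmissibleIdeal I) :
    AIDensity I A (Set.univ : Set ℕ) 1 := by
  intro ε hε
  obtain ⟨N, hN⟩ := Metric.tendsto_atTop.mp hA.row_sum ε hε
  refine hI.subset_mem (hI.finite_mem (Set.finite_Iio N)) ?_
  intro n hn
  simp only [Set.mem_setOf_eq, Set.indicator_univ] at hn
  simp only [Set.mem_Iio]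
  by_contra hc
  push_neg at hc
  have := hN n hc
  rw [Real.dist_eq] at this
  linarith

lemma not_density_univ_zero (hA : RegularMatrix A) (hI : AdmissibleIdeal I) :
    ¬ AIDensity I A (Set.univ : Set ℕ) 0 := by
  intro h0
  have h1 := density_univ_one hA hI
  have hu := hI.union_mem (h0 (1/2) (by norm_num)) (h1 (1/2) (by norm_num))
  apply hI.univ_not_mem
  refine hI.subset_mem hu ?_
  intro n _
  by_contra hc
  simp only [Set.mem_union, Set.mem_setOf_eq, not_or, not_le, sub_zero] at hc
  obtain ⟨ha, hb⟩ := hc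
  rw [abs_lt] at ha hb
  linarith [ha.1, ha.2, hb.1, hb.2]

end Aux

theorem stmt_19 {X : Type*} [MetricSpace X] (A : ℕ → ℕ → ℝ) (I : Set (Set ℕ))
    (hA : RegularMatrix A) (hI : AdmissibleIdeal I) (x : ℕ → X)
    (C : Set X) (hC : IsCompact C) (hb : AIDensity I A {k : ℕ | x k ∉ C} 0) :
    (AIStatClusterPts I A x).Nonempty ∧ IsCompact (AIStatClusterPts I A x) ∧
      AIStatClusterPts I A x ⊆ C := by
  classical
  have hsub : AIStatClusterPts I A x ⊆ C := by
    intro ν hν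
    by_contra hνC
    obtain ⟨ε, hε, hball⟩ := Metric.isOpen_iff.mp hC.isClosed.isOpen_compl ν hνC
    refine hν ε hε (density_zero_mono hA hI ?_ hb)
    intro k hk
    simp only [Set.mem_setOf_eq] at hk ⊢
    exact hball (Metric.mem_ball.mpr hk)
  have hclosed : IsClosed (AIStatClusterPts I A x) := by
    rw [← isOpen_compl_iff, Metric.isOpen_iff]
    intro ν hν
    simp only [Set.mem_compl_iff, AIStatClusterPts, Set.mem_setOf_eq] at hν
    push_neg at hν
    obtain ⟨ε, hε, hd⟩ := hν
    refine ⟨ε/2, by linarith, ?_⟩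
    intro μ hμ
    simp only [Set.mem_compl_iff, AIStatClusterPts, Set.mem_setOf_eq]
    push_neg
    refine ⟨ε/2, by linarith, density_zero_mono hA hI ?_ hd⟩
    intro k hk
    simp only [Set.mem_setOf_eq] at hk ⊢
    have hμν : dist μ ν < ε/2 := Metric.mem_ball.mp hμ
    calc dist (x k) ν ≤ dist (x k) μ + dist μ ν := dist_triangle _ _ _
      _ < ε := by linarith
  have hne : (AIStatClusterPts I A x).Nonempty := by
    by_contra hemp
    rw [Set.not_nonempty_iff_eq_empty] at hemp
    have hch : ∀ c : X, ∃ ε > 0, AIDensity I A {k | dist (x k) c < ε} 0 := by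
      intro c
      have hc : c ∉ AIStatClusterPts I A x := by
        rw [hemp]; exact Set.notMem_empty c
      simp only [AIStatClusterPts, Set.mem_setOf_eq] at hc
      push_neg at hc
      exact hc
    choose ε hε hd using hch
    obtain ⟨t, -, ht⟩ := hC.elim_nhds_subcover (fun c => Metric.ball c (ε c))
      (fun c _ => Metric.ball_mem_nhds c (hε c))
    have hden1 : AIDensity I A {k | x k ∈ C} 0 := by
      refine density_zero_mono hA hI ?_
        (density_zero_biUnion hA hI t (fun c => {k | dist (x k) c < ε c}) (fun c _ => hd c))
      intro k hk
      obtain ⟨c, hct, hcb⟩ := Set.mem_iUnion₂.mp (ht hk)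
      exact Set.mem_iUnion₂.mpr ⟨c, hct, Metric.mem_ball.mp hcb⟩
    have huniv : AIDensity I A (Set.univ : Set ℕ) 0 := by
      refine density_zero_mono hA hI ?_ (density_zero_union hA hI hden1 hb)
      intro k _
      by_cases h : x k ∈ C <;> simp [h]
    exact not_density_univ_zero hA hI huniv
  exact ⟨hne, hC.of_isClosed_subset hclosed hsub, hsub⟩
end
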